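/- arXiv:1403.6053 — 3 statements merged into one kernel-verified Lean document; each statement's English description precedes it below -/
import Mathlib

section
/- Let S be a finite group with subgroups Q, P. The inverse Möb of the table of marks of S has entries Möb_{[Q],[P]} = (1/|W_S Q|) · Σ_{P' ∼_S P} μ(Q,P'), where μ is the Möbius function of the subgroup lattice of S, W_S Q = N_S(Q)/Q, and the sum is over all subgroups P' of S conjugate to P. -/
open Classical

open Pointwise

/-- The set of `S`-conjugacy classes of subgroups of `S`. -/
def SubgroupClasses (S : Type*) [Group S] :=
  Quotient (MulAction.orbitRel (ConjAct S) (Subgroup S))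

set_option linter.unusedSectionVars false
set_option maxHeartbeats 1000000

section helpers
variable {S : Type*} [Group S] [Fintype S]

noncomputable instance : Fintype (Subgroup S) := Fintype.ofFinite _

lemma toConjAct_smul_eq_iff (n : S) (P : Subgroup S) :
    ConjAct.toConjAct n • P = P ↔ n ∈ (Subgroup.normalizer (P : Set S)) := by
  rw [Subgroup.mem_normalizer_iff]
  constructor
  · intro h x
    constructor
    · intro hx
      have := Subgroup.smul_mem_pointwise_smul x (ConjAct.toConjAct n) P hx
      rw [h] at this
      simpa [ConjAct.smul_def] using this
    · intro hx
      have h' : (ConjAct.toConjAct n)⁻¹ • P = P := by rw [inv_smul_eq_iff, h]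
      rw [← h']
      exact Subgroup.mem_inv_pointwise_smul_iff.mpr (by simpa [ConjAct.smul_def] using hx)
  · intro h
    ext x
    rw [Subgroup.mem_smul_pointwise_iff_exists]
    constructor
    · rintro ⟨y, hy, rfl⟩
      simpa [ConjAct.smul_def] using (h y).1 hy
    · intro hx
      refine ⟨n⁻¹ * x * n, by simpa using (Subgroup.mem_normalizer_iff''.mp h x).1 hx, ?_⟩
      simp only [ConjAct.smul_def, ConjAct.ofConjAct_toConjAct]
      group

lemma nat_card_set (p : S → Prop) :
    Nat.card {s : S | p s} = (Finset.univ.filter p).card := by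
  simp [Nat.card_eq_fintype_card, Fintype.card_subtype]

lemma mu_conj {μ : Subgroup S → Subgroup S → ℚ}
    (hζμ : ∀ Q P : Subgroup S,
      ∑ᶠ R : Subgroup S, (if Q ≤ R then (1 : ℚ) else 0) * μ R P
        = if Q = P then 1 else 0)
    (hμζ : ∀ Q P : Subgroup S,
      ∑ᶠ R : Subgroup S, μ Q R * (if R ≤ P then (1 : ℚ) else 0)
        = if Q = P then 1 else 0)
    (g : ConjAct S) (Q P : Subgroup S) :
    μ (g • Q) (g • P) = μ Q P := by
  set Z : Matrix (Subgroup S) (Subgroup S) ℚ :=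
    Matrix.of (fun A B : Subgroup S => if A ≤ B then (1:ℚ) else 0) with hZ
  set M : Matrix (Subgroup S) (Subgroup S) ℚ := Matrix.of (fun A B => μ A B) with hM
  set M' : Matrix (Subgroup S) (Subgroup S) ℚ :=
    Matrix.of (fun A B => μ (g • A) (g • B)) with hM'
  have hMZ : M * Z = 1 := by
    ext A B
    rw [Matrix.mul_apply, Matrix.one_apply, ← finsum_eq_sum_of_fintype]
    exact hμζ A B
  have hZM' : Z * M' = 1 := by
    ext A B
    rw [Matrix.mul_apply, Matrix.one_apply]
    have e1 : ∀ R : Subgroup S, Z A R * M' R B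
        = (if g • A ≤ g • R then (1:ℚ) else 0) * μ (g • R) (g • B) := by
      intro R
      simp only [hZ, hM', Matrix.of_apply, Subgroup.pointwise_smul_le_pointwise_smul_iff]
    calc ∑ R, Z A R * M' R B
        = ∑ R, (fun R' => (if g • A ≤ R' then (1:ℚ) else 0) * μ R' (g • B))
            ((MulAction.toPerm g) R) := by
          refine Finset.sum_congr rfl fun R _ => ?_
          rw [e1 R]; rfl
      _ = ∑ R, (if g • A ≤ R then (1:ℚ) else 0) * μ R (g • B) := by
          apply Fintype.sum_equiv (MulAction.toPerm g)
          intro R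
          rfl
      _ = if g • A = g • B then 1 else 0 := by
          rw [← finsum_eq_sum_of_fintype]; exact hζμ _ _
      _ = if A = B then 1 else 0 := by
          simp only [smul_left_cancel_iff]
  have key : M' = M := by
    calc M' = (M * Z) * M' := by rw [hMZ, Matrix.one_mul]
      _ = M * (Z * M') := Matrix.mul_assoc _ _ _
      _ = M := by rw [hZM', Matrix.mul_one]
  exact congrFun (congrFun key Q) P

lemma card_conj_set (Q P : Subgroup S) :
    Nat.card {s : S | ∀ q ∈ Q, s * q * s⁻¹ ∈ P} =
      Nat.card (Subgroup.normalizer (P : Set S)) *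
        (Finset.univ.filter fun P' : Subgroup S =>
          P' ∈ MulAction.orbit (ConjAct S) P ∧ Q ≤ P').card := by
  have hmem : ∀ s : S, (∀ q ∈ Q, s * q * s⁻¹ ∈ P) ↔ Q ≤ (ConjAct.toConjAct s)⁻¹ • P := by
    intro s
    simp only [SetLike.le_def, Subgroup.mem_inv_pointwise_smul_iff, ConjAct.smul_def,
      ConjAct.ofConjAct_toConjAct]
  set f : S → Subgroup S := fun s => (ConjAct.toConjAct s)⁻¹ • P with hf
  have hNcard : Nat.card (Subgroup.normalizer (P : Set S)) = (Finset.univ.filter (· ∈ (Subgroup.normalizer (P : Set S)))).card := by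
    simp [Nat.card_eq_fintype_card, Fintype.card_subtype]
  rw [nat_card_set]
  simp only [hmem]
  rw [Finset.card_eq_sum_card_fiberwise (f := f)
    (t := Finset.univ.filter fun P' : Subgroup S =>
      P' ∈ MulAction.orbit (ConjAct S) P ∧ Q ≤ P')
    (fun s hs => by
      simp only [Finset.mem_coe, Finset.coe_filter, Set.mem_setOf_eq, Finset.mem_filter, Finset.mem_univ, true_and] at hs ⊢
      exact ⟨MulAction.mem_orbit P _, hs⟩)]
  have hfib : ∀ P' ∈ (Finset.univ.filter fun P' : Subgroup S =>
      P' ∈ MulAction.orbit (ConjAct S) P ∧ Q ≤ P'),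
      ((Finset.univ.filter fun s : S => Q ≤ f s).filter fun s => f s = P').card
        = Nat.card (Subgroup.normalizer (P : Set S)) := by
    intro P' hP'
    simp only [Finset.mem_filter, Finset.mem_univ, true_and] at hP'
    obtain ⟨⟨g, hg⟩, hQP'⟩ := hP'
    set s₀ : S := ConjAct.ofConjAct g⁻¹ with hs₀
    have hfs₀ : f s₀ = P' := by
      show (ConjAct.toConjAct s₀)⁻¹ • P = P'
      simp only [hs₀, ConjAct.toConjAct_ofConjAct, inv_inv]
      simpa using hg
    rw [hNcard]
    apply Finset.card_nbij' (i := fun s => s * s₀⁻¹) (j := fun n => n * s₀)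
    · -- maps fiber to normalizer
      intro s hs
      simp only [Finset.mem_coe, Finset.mem_filter, Finset.mem_univ, true_and] at hs ⊢
      obtain ⟨_, hfs⟩ := hs
      have h1 : ConjAct.toConjAct (s₀ * s⁻¹) • P = P := by
        have h : (ConjAct.toConjAct s)⁻¹ • P = (ConjAct.toConjAct s₀)⁻¹ • P :=
          hfs.trans hfs₀.symm
        rw [map_mul, map_inv, mul_smul, h]
        simp
      have h2 : s₀ * s⁻¹ ∈ (Subgroup.normalizer (P : Set S)) := (toConjAct_smul_eq_iff _ _).mp h1
      have := (Subgroup.normalizer (P : Set S)).inv_mem h2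
      simpa using this
    · -- maps normalizer to fiber
      intro n hn
      simp only [Finset.mem_coe, Finset.mem_filter, Finset.mem_univ, true_and] at hn ⊢
      have hninv : n⁻¹ ∈ (Subgroup.normalizer (P : Set S)) := (Subgroup.normalizer (P : Set S)).inv_mem hn
      have h1 : (ConjAct.toConjAct n)⁻¹ • P = P := by
        rw [← ConjAct.toConjAct_inv]
        exact (toConjAct_smul_eq_iff _ _).mpr hninv
      have hfn : f (n * s₀) = P' := by
        have h2 : f (n * s₀) = (ConjAct.toConjAct s₀)⁻¹ • ((ConjAct.toConjAct n)⁻¹ • P) := by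
          show (ConjAct.toConjAct (n * s₀))⁻¹ • P = _
          rw [map_mul, mul_inv_rev, mul_smul]
        rw [h2, h1]
        exact hfs₀
      exact ⟨hfn ▸ hQP', hfn⟩
    · intro s _; group
    · intro n _; group
  rw [Finset.sum_congr rfl hfib, Finset.sum_const, smul_eq_mul, mul_comm]





lemma map_conj_eq_smul (s : S) (P : Subgroup S) :
    P.map (MulAut.conj s).toMonoidHom = ConjAct.toConjAct s • P := by
  ext x
  simp [Subgroup.mem_smul_pointwise_iff_exists, ConjAct.smul_def, Subgroup.mem_map]

lemma exists_conj_iff_mem_orbit (P P' : Subgroup S) :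
    (∃ s : S, P.map (MulAut.conj s).toMonoidHom = P') ↔ P' ∈ MulAction.orbit (ConjAct S) P := by
  constructor
  · rintro ⟨s, rfl⟩; rw [map_conj_eq_smul]; exact MulAction.mem_orbit _ _
  · rintro ⟨g, rfl⟩
    exact ⟨ConjAct.ofConjAct g, by rw [map_conj_eq_smul]; simp⟩

lemma smul_mem_orbit_iff' (g : ConjAct S) (A B : Subgroup S) :
    g • A ∈ MulAction.orbit (ConjAct S) B ↔ A ∈ MulAction.orbit (ConjAct S) B := by
  constructor
  · rintro ⟨h, hh⟩
    refine ⟨g⁻¹ * h, ?_⟩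
    show (g⁻¹ * h) • B = A
    have hh' : h • B = g • A := hh
    rw [mul_smul, hh', inv_smul_smul]
  · rintro ⟨h, hh⟩
    refine ⟨g * h, ?_⟩
    show (g * h) • B = g • A
    have hh' : h • B = A := hh
    rw [mul_smul, hh']

lemma mem_orbit_out_iff (d : SubgroupClasses S) (P' : Subgroup S) :
    P' ∈ MulAction.orbit (ConjAct S) (Quotient.out d)
      ↔ Quotient.mk (MulAction.orbitRel (ConjAct S) (Subgroup S)) P' = d := by
  constructor
  · intro h
    exact (Quotient.sound h).trans (Quotient.out_eq d)
  · intro h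
    exact Quotient.exact (h.trans (Quotient.out_eq d).symm)

lemma card_normalizer_eq (P : Subgroup S) :
    Nat.card (Subgroup.normalizer (P : Set S))
      = Nat.card (↥(Subgroup.normalizer (P : Set S)) ⧸ P.subgroupOf (Subgroup.normalizer (P : Set S))) * Nat.card P := by
  rw [Subgroup.card_eq_card_quotient_mul_card_subgroup (P.subgroupOf (Subgroup.normalizer (P : Set S)))]
  congr 1
  exact Nat.card_congr (Subgroup.subgroupOfEquivOfLe Subgroup.le_normalizer).toEquiv

end helpers

/-- The inverse of the table of marks of `S` has entries
`Möb_{[Q],[P]} = (1/|W_S Q|) · Σ_{P' ∼_S P} μ(Q,P')`, where `μ` is the Möbius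
function of the subgroup lattice of `S`. -/
theorem stmt_10 (S : Type*) [Group S] [Fintype S]
    [Fintype (SubgroupClasses S)] [DecidableEq (SubgroupClasses S)]
    (μ : Subgroup S → Subgroup S → ℚ)
    (hζμ : ∀ Q P : Subgroup S,
      ∑ᶠ R : Subgroup S, (if Q ≤ R then (1 : ℚ) else 0) * μ R P
        = if Q = P then 1 else 0)
    (hμζ : ∀ Q P : Subgroup S,
      ∑ᶠ R : Subgroup S, μ Q R * (if R ≤ P then (1 : ℚ) else 0)
        = if Q = P then 1 else 0) :
    Matrix.of (fun c d : SubgroupClasses S =>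
        ((Nat.card {s : S | ∀ q ∈ (Quotient.out c : Subgroup S),
            s * q * s⁻¹ ∈ (Quotient.out d : Subgroup S)}
          / Nat.card (Quotient.out d : Subgroup S) : ℕ) : ℚ)) *
      Matrix.of (fun c d : SubgroupClasses S =>
        (1 / (Nat.card (↥(Subgroup.normalizer ((Quotient.out c : Subgroup S) : Set S)) ⧸
            (Quotient.out c : Subgroup S).subgroupOf
              (Subgroup.normalizer ((Quotient.out c : Subgroup S) : Set S))) : ℚ)) *
          ∑ᶠ P' : Subgroup S,
            if ∃ s : S, (Quotient.out d : Subgroup S).map (MulAut.conj s).toMonoidHom = P'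
            then μ (Quotient.out c) P' else 0) = 1
    ∧ Matrix.of (fun c d : SubgroupClasses S =>
        (1 / (Nat.card (↥(Subgroup.normalizer ((Quotient.out c : Subgroup S) : Set S)) ⧸
            (Quotient.out c : Subgroup S).subgroupOf
              (Subgroup.normalizer ((Quotient.out c : Subgroup S) : Set S))) : ℚ)) *
          ∑ᶠ P' : Subgroup S,
            if ∃ s : S, (Quotient.out d : Subgroup S).map (MulAut.conj s).toMonoidHom = P'
            then μ (Quotient.out c) P' else 0) *
      Matrix.of (fun c d : SubgroupClasses S =>
        ((Nat.card {s : S | ∀ q ∈ (Quotient.out c : Subgroup S),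
            s * q * s⁻¹ ∈ (Quotient.out d : Subgroup S)}
          / Nat.card (Quotient.out d : Subgroup S) : ℕ) : ℚ)) = 1 := by
  have key : Matrix.of (fun c d : SubgroupClasses S =>
        ((Nat.card {s : S | ∀ q ∈ (Quotient.out c : Subgroup S),
            s * q * s⁻¹ ∈ (Quotient.out d : Subgroup S)}
          / Nat.card (Quotient.out d : Subgroup S) : ℕ) : ℚ)) *
      Matrix.of (fun c d : SubgroupClasses S =>
        (1 / (Nat.card (↥(Subgroup.normalizer ((Quotient.out c : Subgroup S) : Set S)) ⧸
            (Quotient.out c : Subgroup S).subgroupOf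
              (Subgroup.normalizer ((Quotient.out c : Subgroup S) : Set S))) : ℚ)) *
          ∑ᶠ P' : Subgroup S,
            if ∃ s : S, (Quotient.out d : Subgroup S).map (MulAut.conj s).toMonoidHom = P'
            then μ (Quotient.out c) P' else 0) = 1 := by
    ext c e
    rw [Matrix.mul_apply, Matrix.one_apply]
    simp only [Matrix.of_apply]
    set Qc : Subgroup S := Quotient.out c with hQc
    set Re : Subgroup S := Quotient.out e with hRe
    set σ : Subgroup S → ℚ := fun P =>
      ∑ P' : Subgroup S,
        if P' ∈ MulAction.orbit (ConjAct S) Re then μ P P' else 0 with hσ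
    have hσinv : ∀ (g : ConjAct S) (P : Subgroup S), σ (g • P) = σ P := by
      intro g P
      rw [hσ]
      apply Fintype.sum_equiv (MulAction.toPerm g⁻¹)
      intro P'
      show (if P' ∈ MulAction.orbit (ConjAct S) Re then μ (g • P) P' else 0)
        = if g⁻¹ • P' ∈ MulAction.orbit (ConjAct S) Re then μ P (g⁻¹ • P') else 0
      have hval : μ P (g⁻¹ • P') = μ (g • P) P' := by
        have h := mu_conj hζμ hμζ g⁻¹ (g • P) P'
        rwa [inv_smul_smul] at h
      exact (if_congr (smul_mem_orbit_iff' g⁻¹ P' Re) hval rfl).symm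
    have hterm : ∀ d : SubgroupClasses S,
        ((Nat.card {s : S | ∀ q ∈ Qc, s * q * s⁻¹ ∈ (Quotient.out d : Subgroup S)}
          / Nat.card (Quotient.out d : Subgroup S) : ℕ) : ℚ) *
        ((1 / (Nat.card (↥(Subgroup.normalizer ((Quotient.out d : Subgroup S) : Set S)) ⧸
            (Quotient.out d : Subgroup S).subgroupOf
              (Subgroup.normalizer ((Quotient.out d : Subgroup S) : Set S))) : ℚ)) *
          ∑ᶠ P' : Subgroup S,
            if ∃ s : S, Re.map (MulAut.conj s).toMonoidHom = P'
            then μ (Quotient.out d) P' else 0)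
        = ∑ P' ∈ (Finset.univ.filter fun P' : Subgroup S =>
            P' ∈ MulAction.orbit (ConjAct S) (Quotient.out d) ∧ Qc ≤ P'), σ P' := by
      intro d
      set Pd : Subgroup S := Quotient.out d with hPd
      set w : ℕ := Nat.card (↥(Subgroup.normalizer (Pd : Set S)) ⧸ Pd.subgroupOf (Subgroup.normalizer (Pd : Set S))) with hwd
      set B : Finset (Subgroup S) := Finset.univ.filter fun P' : Subgroup S =>
        P' ∈ MulAction.orbit (ConjAct S) Pd ∧ Qc ≤ P' with hB
      have hwpos : (0:ℚ) < (w : ℚ) := by exact_mod_cast Nat.card_pos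
      have h1 : Nat.card {s : S | ∀ q ∈ Qc, s * q * s⁻¹ ∈ Pd} / Nat.card Pd
          = w * B.card := by
        rw [card_conj_set, card_normalizer_eq]
        rw [show Nat.card (↥(Subgroup.normalizer (Pd : Set S)) ⧸ Pd.subgroupOf (Subgroup.normalizer (Pd : Set S))) * Nat.card Pd * B.card
            = w * B.card * Nat.card Pd by rw [hwd]; ring]
        exact Nat.mul_div_cancel _ Nat.card_pos
      have h2 : (∑ᶠ P' : Subgroup S,
            if ∃ s : S, Re.map (MulAut.conj s).toMonoidHom = P'
            then μ Pd P' else 0) = σ Pd := by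
        rw [finsum_eq_sum_of_fintype, hσ]
        refine Finset.sum_congr rfl fun P' _ => ?_
        exact if_congr (exists_conj_iff_mem_orbit Re P') rfl rfl
      have hconst : ∀ P' ∈ B, σ P' = σ Pd := by
        intro P' hP'
        rw [hB] at hP'
        simp only [Finset.mem_filter, Finset.mem_univ, true_and] at hP'
        obtain ⟨⟨g, hg⟩, -⟩ := hP'
        have hg' : g • Pd = P' := hg
        rw [← hg', hσinv]
      rw [h1, h2, Finset.sum_congr rfl hconst, Finset.sum_const, nsmul_eq_mul]
      push_cast
      field_simp
    rw [Finset.sum_congr rfl fun d _ => hterm d]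
    have hfilter : ∀ d : SubgroupClasses S,
        (Finset.univ.filter fun P' : Subgroup S =>
            P' ∈ MulAction.orbit (ConjAct S) (Quotient.out d) ∧ Qc ≤ P')
          = (Finset.univ.filter fun P' : Subgroup S => Qc ≤ P').filter
              (fun P' => Quotient.mk (MulAction.orbitRel (ConjAct S) (Subgroup S)) P' = d) := by
      intro d
      rw [Finset.filter_filter]
      apply Finset.filter_congr
      intro P' _
      rw [mem_orbit_out_iff]
      exact ⟨fun h => ⟨h.2, h.1⟩, fun h => ⟨h.2, h.1⟩⟩
    rw [Finset.sum_congr rfl fun d _ => by rw [hfilter d]]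
    refine Eq.trans (b := ∑ P' ∈ Finset.univ.filter (fun P' : Subgroup S => Qc ≤ P'), σ P') ?_ ?_
    · convert Finset.sum_fiberwise (κ := SubgroupClasses S) (Finset.univ.filter fun P' : Subgroup S => Qc ≤ P')
        (fun P' => Quotient.mk (MulAction.orbitRel (ConjAct S) (Subgroup S)) P') σ
      exact Iff.rfl
    rw [Finset.sum_filter]
    calc ∑ P' : Subgroup S, (if Qc ≤ P' then σ P' else 0)
        = ∑ P' : Subgroup S, ∑ P'' : Subgroup S,
            (if Qc ≤ P' then (1:ℚ) else 0) *
              (if P'' ∈ MulAction.orbit (ConjAct S) Re then μ P' P'' else 0) := by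
          refine Finset.sum_congr rfl fun P' _ => ?_
          rw [← Finset.mul_sum]
          by_cases h : Qc ≤ P' <;> simp [h, hσ]
      _ = ∑ P'' : Subgroup S, ∑ P' : Subgroup S,
            (if Qc ≤ P' then (1:ℚ) else 0) *
              (if P'' ∈ MulAction.orbit (ConjAct S) Re then μ P' P'' else 0) :=
          Finset.sum_comm
      _ = ∑ P'' : Subgroup S,
            (if P'' ∈ MulAction.orbit (ConjAct S) Re
              then (if Qc = P'' then (1:ℚ) else 0) else 0) := by
          refine Finset.sum_congr rfl fun P'' _ => ?_
          by_cases h : P'' ∈ MulAction.orbit (ConjAct S) Re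
          · simp only [h, if_true]
            rw [← finsum_eq_sum_of_fintype]
            exact hζμ Qc P''
          · simp [h]
      _ = ∑ P'' : Subgroup S,
            (if Qc = P''
              then (if P'' ∈ MulAction.orbit (ConjAct S) Re then (1:ℚ) else 0) else 0) := by
          refine Finset.sum_congr rfl fun P'' _ => ?_
          by_cases h1 : Qc = P'' <;>
            by_cases h2 : P'' ∈ MulAction.orbit (ConjAct S) Re <;> simp [h1, h2]
      _ = if Qc ∈ MulAction.orbit (ConjAct S) Re then (1:ℚ) else 0 := by
          rw [Finset.sum_ite_eq]
          simp
      _ = if c = e then (1:ℚ) else 0 := by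
          refine if_congr ((mem_orbit_out_iff e Qc).trans ?_) rfl rfl
          rw [hQc]
          exact Eq.congr_left (Quotient.out_eq c)
  exact ⟨key, mul_eq_one_comm.mp key⟩
end

section
/- Let p be a prime and S a finite p-group with subgroups Q ≤ P. If μ(Q,P) ≠ 0, where μ is the Möbius function of the subgroup lattice of S, then P ≤ N_S(Q) and P/Q is elementary abelian. -/
open Classical Finset

section aux

variable {S : Type*} [Group S] [Fintype S]

private lemma sub_finite : Finite (Subgroup S) :=
  Finite.of_injective (fun H => (H : Set S)) SetLike.coe_injective

private lemma card_strict {R P : Subgroup S} (h : R < P) : Nat.card R < Nat.card P := by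
  have h1 : ((R : Set S)).ncard < ((P : Set S)).ncard :=
    Set.ncard_lt_ncard (by exact_mod_cast h) (Set.toFinite _)
  simp only [← Nat.card_coe_set_eq] at h1
  exact h1

private lemma mu_support [Fintype (Subgroup S)] (μ : Subgroup S → Subgroup S → ℤ)
    (hμζ : ∀ Q P : Subgroup S,
      (∑ R : Subgroup S, μ Q R * (if R ≤ P then (1 : ℤ) else 0)) = if Q = P then 1 else 0) :
    ∀ (n : ℕ) (P : Subgroup S), Nat.card P ≤ n → ∀ Q, ¬ Q ≤ P → μ Q P = 0 := by
  intro n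
  induction n with
  | zero =>
    intro P hP Q hQ
    exact absurd (Nat.le_zero.mp hP) Nat.card_pos.ne'
  | succ n ih =>
    intro P hP Q hQ
    have h := hμζ Q P
    rw [if_neg (by rintro rfl; exact hQ le_rfl)] at h
    rw [Finset.sum_eq_single P (fun R _ hRP => ?_) (fun h => absurd (Finset.mem_univ P) h)] at h
    · rw [if_pos le_rfl, mul_one] at h; exact h
    · by_cases hle : R ≤ P
      · have hlt : R < P := lt_of_le_of_ne hle hRP
        have hcard := card_strict hlt
        rw [ih R (by omega) Q (fun hQR => hQ (hQR.trans hle)), zero_mul]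
      · rw [if_neg hle, mul_zero]

end aux
section aux2

variable {S : Type*} [Group S] [Fintype S] [Fintype (Subgroup S)]
  (μ : Subgroup S → Subgroup S → ℤ)

private lemma deltaL (hsupp : ∀ Q P : Subgroup S, ¬ Q ≤ P → μ Q P = 0)
    (hζμ : ∀ Q P : Subgroup S,
      (∑ R : Subgroup S, (if Q ≤ R then (1 : ℤ) else 0) * μ R P) = if Q = P then 1 else 0)
    (Q P : Subgroup S) :
    (∑ R : Subgroup S, if Q ≤ R ∧ R ≤ P then μ R P else 0) = if Q = P then 1 else 0 := by
  rw [← hζμ Q P]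
  refine Finset.sum_congr rfl fun R _ => ?_
  by_cases h1 : Q ≤ R
  · by_cases h2 : R ≤ P
    · rw [if_pos ⟨h1, h2⟩, if_pos h1, one_mul]
    · rw [if_neg (fun h => h2 h.2), if_pos h1, one_mul, hsupp R P h2]
  · rw [if_neg (fun h => h1 h.1), if_neg h1, zero_mul]

private lemma deltaR (hsupp : ∀ Q P : Subgroup S, ¬ Q ≤ P → μ Q P = 0)
    (hμζ : ∀ Q P : Subgroup S,
      (∑ R : Subgroup S, μ Q R * (if R ≤ P then (1 : ℤ) else 0)) = if Q = P then 1 else 0)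
    (Q P : Subgroup S) :
    (∑ R : Subgroup S, if Q ≤ R ∧ R ≤ P then μ Q R else 0) = if Q = P then 1 else 0 := by
  rw [← hμζ Q P]
  refine Finset.sum_congr rfl fun R _ => ?_
  by_cases h2 : R ≤ P
  · by_cases h1 : Q ≤ R
    · rw [if_pos ⟨h1, h2⟩, if_pos h2, mul_one]
    · rw [if_neg (fun h => h1 h.1), hsupp Q R h1, zero_mul]
  · rw [if_neg (fun h => h2 h.2), if_neg h2, mul_zero]

private lemma weisner (hsupp : ∀ Q P : Subgroup S, ¬ Q ≤ P → μ Q P = 0)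
    (hζμ : ∀ Q P : Subgroup S,
      (∑ R : Subgroup S, (if Q ≤ R then (1 : ℤ) else 0) * μ R P) = if Q = P then 1 else 0)
    (hμζ : ∀ Q P : Subgroup S,
      (∑ R : Subgroup S, μ Q R * (if R ≤ P then (1 : ℤ) else 0)) = if Q = P then 1 else 0)
    (Q P a : Subgroup S) (haP : a ≤ P) (haQ : ¬ a ≤ Q) :
    (∑ x : Subgroup S, if Q ≤ x ∧ x ≤ P ∧ x ⊔ a = P then μ Q x else 0) = 0 := by
  have step1 : (∑ x : Subgroup S, if Q ≤ x ∧ x ≤ P ∧ x ⊔ a = P then μ Q x else 0)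
      = ∑ x : Subgroup S, ∑ y : Subgroup S,
          if (a ≤ y ∧ y ≤ P) ∧ (Q ≤ x ∧ x ≤ y) then μ Q x * μ y P else 0 := by
    refine Finset.sum_congr rfl fun x _ => ?_
    by_cases h1 : Q ≤ x ∧ x ≤ P
    · have hx : (if x ⊔ a = P then (1:ℤ) else 0)
          = ∑ y : Subgroup S, if x ⊔ a ≤ y ∧ y ≤ P then μ y P else 0 :=
        (deltaL μ hsupp hζμ (x ⊔ a) P).symm
      have : (if Q ≤ x ∧ x ≤ P ∧ x ⊔ a = P then μ Q x else 0)
          = μ Q x * (if x ⊔ a = P then (1:ℤ) else 0) := by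
        by_cases h2 : x ⊔ a = P
        · rw [if_pos ⟨h1.1, h1.2, h2⟩, if_pos h2, mul_one]
        · rw [if_neg (fun h => h2 h.2.2), if_neg h2, mul_zero]
      rw [this, hx, Finset.mul_sum]
      refine Finset.sum_congr rfl fun y _ => ?_
      by_cases h3 : x ⊔ a ≤ y ∧ y ≤ P
      · have h3' : (a ≤ y ∧ y ≤ P) ∧ Q ≤ x ∧ x ≤ y :=
          ⟨⟨le_trans le_sup_right h3.1, h3.2⟩, h1.1, le_trans le_sup_left h3.1⟩
        rw [if_pos h3, if_pos h3']
      · have h3' : ¬ ((a ≤ y ∧ y ≤ P) ∧ Q ≤ x ∧ x ≤ y) := by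
          rintro ⟨⟨hay, hyP⟩, hQx, hxy⟩
          exact h3 ⟨sup_le hxy hay, hyP⟩
        rw [if_neg h3, if_neg h3', mul_zero]
    · have e1 : (if Q ≤ x ∧ x ≤ P ∧ x ⊔ a = P then μ Q x else 0) = 0 := by
        rw [if_neg (fun h => h1 ⟨h.1, h.2.1⟩)]
      rw [e1]
      symm
      refine Finset.sum_eq_zero fun y _ => ?_
      refine if_neg ?_
      rintro ⟨⟨hay, hyP⟩, hQx, hxy⟩
      exact h1 ⟨hQx, hxy.trans hyP⟩
  rw [step1, Finset.sum_comm]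
  have step2 : ∀ y : Subgroup S,
      (∑ x : Subgroup S, if (a ≤ y ∧ y ≤ P) ∧ (Q ≤ x ∧ x ≤ y) then μ Q x * μ y P else 0)
      = (if a ≤ y ∧ y ≤ P then (if Q = y then (1:ℤ) else 0) * μ y P else 0) := by
    intro y
    by_cases hy : a ≤ y ∧ y ≤ P
    · rw [if_pos hy, ← deltaR μ hsupp hμζ Q y, Finset.sum_mul]
      refine Finset.sum_congr rfl fun x _ => ?_
      by_cases hx : Q ≤ x ∧ x ≤ y
      · rw [if_pos ⟨hy, hx⟩, if_pos hx]
      · rw [if_neg (fun h => hx h.2), if_neg hx, zero_mul]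
    · rw [if_neg hy]
      refine Finset.sum_eq_zero fun x _ => if_neg (fun h => hy h.1)
  rw [Finset.sum_congr rfl (fun y _ => step2 y)]
  rw [Finset.sum_eq_single Q (fun y _ hyQ => ?_) (fun h => absurd (Finset.mem_univ Q) h)]
  · rw [if_neg (fun h => haQ h.1)]
  · by_cases hy : a ≤ y ∧ y ≤ P
    · rw [if_pos hy, if_neg (fun h => hyQ h.symm), zero_mul]
    · rw [if_neg hy]

end aux2
section aux3

variable {S : Type*} [Group S] [Fintype S]

private lemma exists_max (x P : Subgroup S) (h : x < P) :
    ∃ M : Subgroup S, x ≤ M ∧ M < P ∧ ∀ R, M < R → R ≤ P → R = P := by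
  haveI : Finite (Subgroup S) := sub_finite
  have hwf : WellFounded ((· > ·) : Subgroup S → Subgroup S → Prop) :=
    (Finite.to_wellFoundedGT).wf
  obtain ⟨M, hM, hmax⟩ := hwf.has_min {R | x ≤ R ∧ R < P} ⟨x, le_rfl, h⟩
  refine ⟨M, hM.1, hM.2, fun R hMR hRP => ?_⟩
  by_contra hne
  exact hmax R ⟨hM.1.trans hMR.le, lt_of_le_of_ne hRP hne⟩ hMR

private lemma max_char {p : ℕ} [Fact p.Prime] (hS : IsPGroup p S)
    (P M : Subgroup S) (hM : M < P) (hmax : ∀ R, M < R → R ≤ P → R = P) :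
    (∀ x ∈ P, ∀ y ∈ P, x * y * x⁻¹ * y⁻¹ ∈ M) ∧ (∀ x ∈ P, x ^ p ∈ M) := by
  have hp := (Fact.out : p.Prime)
  set G := ↥P
  have hPG : IsPGroup p G := hS.to_subgroup P
  set N : Subgroup G := M.subgroupOf P with hN
  -- N is a coatom
  have hco : IsCoatom N := by
    constructor
    · obtain ⟨z, hzP, hzM⟩ := SetLike.exists_of_lt hM
      intro htop
      have : (⟨z, hzP⟩ : G) ∈ N := htop ▸ Subgroup.mem_top _
      exact hzM (Subgroup.mem_subgroupOf.mp this)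
    · intro R' hR'
      have hinj : Function.Injective P.subtype := P.subtype_injective
      have hMeq : N.map P.subtype = M := by
        rw [Subgroup.subgroupOf_map_subtype, inf_eq_left.mpr hM.le]
      have hsm : StrictMono (Subgroup.map P.subtype) :=
        (Subgroup.gc_map_comap P.subtype).monotone_l.strictMono_of_injective
          (Subgroup.map_injective hinj)
      have hlt : M < R'.map P.subtype := by
        rw [← hMeq]; exact hsm hR'
      have hE := hmax _ hlt (Subgroup.map_subtype_le R')
      apply Subgroup.map_injective hinj
      rw [hE, ← MonoidHom.range_eq_map, Subgroup.range_subtype]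
  -- N is normal
  haveI : Finite G := inferInstance
  haveI hNn : N.Normal :=
    Subgroup.NormalizerCondition.normal_of_coatom N (normalizerCondition_of_isNilpotent (h := hPG.isNilpotent)) hco
  -- quotient
  set Gq := G ⧸ N
  have hq : IsPGroup p Gq := hPG.to_quotient N
  obtain ⟨z, hzP, hzM⟩ := SetLike.exists_of_lt hM
  have hz1 : (QuotientGroup.mk' N (⟨z, hzP⟩ : G)) ≠ 1 := by
    rw [Ne, QuotientGroup.mk'_apply, QuotientGroup.eq_one_iff]
    exact fun hmem => hzM (Subgroup.mem_subgroupOf.mp hmem)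
  -- every subgroup of Gq is ⊥ or ⊤
  have hsub : ∀ H : Subgroup Gq, H = ⊥ ∨ H = ⊤ := by
    intro H
    have hNle : N ≤ Subgroup.comap (QuotientGroup.mk' N) H := by
      intro n hn
      have : QuotientGroup.mk' N n = 1 := by
        rw [QuotientGroup.mk'_apply, QuotientGroup.eq_one_iff]; exact hn
      rw [Subgroup.mem_comap, this]
      exact H.one_mem
    rcases eq_or_lt_of_le hNle with hEq | hLt
    · left
      have hmc := Subgroup.map_comap_eq_self_of_surjective
        (QuotientGroup.mk'_surjective N) H
      rw [← hmc, ← hEq, Subgroup.map_eq_bot_iff, QuotientGroup.ker_mk']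
    · right
      have htop := hco.2 _ hLt
      apply Subgroup.comap_injective (QuotientGroup.mk'_surjective N)
      rw [htop, Subgroup.comap_top]
  -- Gq is cyclic generated by some g with g ^ p = 1
  obtain ⟨g, hg1⟩ : ∃ g : Gq, g ≠ 1 := ⟨_, hz1⟩
  have hZg : Subgroup.zpowers g = ⊤ :=
    (hsub _).resolve_left (fun hbot => hg1 (Subgroup.zpowers_eq_bot.mp hbot))
  have hgp : g ^ p = 1 := by
    rcases hsub (Subgroup.zpowers (g ^ p)) with hbot | htop
    · exact Subgroup.zpowers_eq_bot.mp hbot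
    · exfalso
      obtain ⟨k, hk⟩ := (IsPGroup.iff_orderOf.mp hq) g
      have hk0 : k ≠ 0 := by
        rintro rfl
        exact hg1 (orderOf_eq_one_iff.mp (by simpa using hk))
      have hdvd : p ∣ orderOf g := hk ▸ dvd_pow_self p hk0
      have ho1 : orderOf (g ^ p) = orderOf g / p :=
        orderOf_pow_of_dvd (Nat.Prime.ne_zero ‹Fact p.Prime›.out) hdvd
      have hcard1 : Nat.card Gq = orderOf g := by
        rw [← Nat.card_zpowers, hZg, Subgroup.card_top]
      have hcard2 : Nat.card Gq = orderOf (g ^ p) := by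
        rw [← Nat.card_zpowers, htop, Subgroup.card_top]
      rw [hcard1, ho1] at hcard2
      rw [hk] at hcard2 hdvd
      have hplt : 1 < p := ‹Fact p.Prime›.out.one_lt
      have : p ^ k / p < p ^ k :=
        Nat.div_lt_self (pow_pos (by omega) k) hplt
      omega
  have hmem : ∀ u : Gq, u ∈ Subgroup.zpowers g := fun u => hZg ▸ Subgroup.mem_top u
  -- commutativity of Gq
  have hcomm : ∀ u v : Gq, u * v = v * u := by
    intro u v
    obtain ⟨m, hm⟩ := hmem u
    obtain ⟨n, hn⟩ := hmem v
    rw [← hm, ← hn, ← zpow_add, ← zpow_add, add_comm]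
  -- exponent p
  have hexp : ∀ u : Gq, u ^ p = 1 := by
    intro u
    obtain ⟨m, hm⟩ := hmem u
    rw [← hm, ← zpow_natCast (g ^ m) p, ← zpow_mul, mul_comm, zpow_mul,
      zpow_natCast, hgp, one_zpow]
  constructor
  · intro x hx y hy
    have key : (⟨x, hx⟩ * ⟨y, hy⟩ * (⟨x, hx⟩ : G)⁻¹ * (⟨y, hy⟩ : G)⁻¹) ∈ N := by
      rw [← QuotientGroup.eq_one_iff]
      simp only [QuotientGroup.mk_mul, QuotientGroup.mk_inv]
      exact commutatorElement_eq_one_iff_mul_comm.mpr (hcomm _ _)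
    have := Subgroup.mem_subgroupOf.mp key
    simpa using this
  · intro x hx
    have key : ((⟨x, hx⟩ : G) ^ p) ∈ N := by
      rw [← QuotientGroup.eq_one_iff]
      simp only [QuotientGroup.mk_pow]
      exact hexp _
    have := Subgroup.mem_subgroupOf.mp key
    simpa using this

end aux3
/-- Hawkes–Isaacs–Özaydın / Kratzer–Thévenaz: in a finite `p`-group `S`, if
`Q ≤ P` and the Möbius function of the subgroup lattice has `μ(Q,P) ≠ 0`, then
`P ≤ N_S(Q)` and `P/Q` is elementary abelian. -/
theorem stmt_13 (p : ℕ) [Fact p.Prime] (S : Type*) [Group S] [Fintype S]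
    (hS : IsPGroup p S)
    (μ : Subgroup S → Subgroup S → ℤ)
    (hζμ : ∀ Q P : Subgroup S,
      ∑ᶠ R : Subgroup S, (if Q ≤ R then (1 : ℤ) else 0) * μ R P
        = if Q = P then 1 else 0)
    (hμζ : ∀ Q P : Subgroup S,
      ∑ᶠ R : Subgroup S, μ Q R * (if R ≤ P then (1 : ℤ) else 0)
        = if Q = P then 1 else 0)
    (Q P : Subgroup S) (hQP : Q ≤ P) (hμ : μ Q P ≠ 0) :
    P ≤ Subgroup.normalizer (Q : Set S)
    ∧ (∀ x ∈ P, ∀ y ∈ P, x * y * x⁻¹ * y⁻¹ ∈ Q)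
    ∧ (∀ x ∈ P, x ^ p ∈ Q) := by
  haveI : Finite (Subgroup S) := sub_finite
  letI : Fintype (Subgroup S) := Fintype.ofFinite _
  have hζμ' : ∀ Q P : Subgroup S,
      (∑ R : Subgroup S, (if Q ≤ R then (1:ℤ) else 0) * μ R P) = if Q = P then 1 else 0 := by
    intro Q P; rw [← finsum_eq_sum_of_fintype]; exact hζμ Q P
  have hμζ' : ∀ Q P : Subgroup S,
      (∑ R : Subgroup S, μ Q R * (if R ≤ P then (1:ℤ) else 0)) = if Q = P then 1 else 0 := by
    intro Q P; rw [← finsum_eq_sum_of_fintype]; exact hμζ Q P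
  have hsupp : ∀ Q P : Subgroup S, ¬ Q ≤ P → μ Q P = 0 := fun Q' P' h =>
    mu_support μ hμζ' (Nat.card P') P' le_rfl Q' h
  set K : Subgroup S :=
    Subgroup.closure {z : S | (∃ x ∈ P, ∃ y ∈ P, z = x * y * x⁻¹ * y⁻¹) ∨ ∃ x ∈ P, z = x ^ p}
    with hK
  have hKP : K ≤ P := by
    rw [hK, Subgroup.closure_le]
    rintro z (⟨x, hx, y, hy, rfl⟩ | ⟨x, hx, rfl⟩)
    · exact P.mul_mem (P.mul_mem (P.mul_mem hx hy) (P.inv_mem hx)) (P.inv_mem hy)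
    · exact P.pow_mem hx p
  have hKQ : K ≤ Q := by
    by_contra hKQ
    have haQ : ¬ (Q ⊔ K) ≤ Q := fun h => hKQ (le_trans le_sup_right h)
    have haP : Q ⊔ K ≤ P := sup_le hQP hKP
    have hw := weisner μ hsupp hζμ' hμζ' Q P (Q ⊔ K) haP haQ
    rw [Finset.sum_eq_single P (fun x _ hxP => ?_)
      (fun h => absurd (Finset.mem_univ P) h)] at hw
    · rw [if_pos ⟨hQP, le_rfl, sup_eq_left.mpr haP⟩] at hw
      exact hμ hw
    · refine if_neg ?_
      rintro ⟨hQx, hxle, hsup⟩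
      have hxlt : x < P := lt_of_le_of_ne hxle hxP
      obtain ⟨M, hxM, hMP, hmax⟩ := exists_max x P hxlt
      have hKM : K ≤ M := by
        rw [hK, Subgroup.closure_le]
        obtain ⟨hcm, hpm⟩ := max_char hS P M hMP hmax
        rintro z (⟨a, ha, b, hb, rfl⟩ | ⟨a, ha, rfl⟩)
        · exact hcm a ha b hb
        · exact hpm a ha
      have hle : x ⊔ (Q ⊔ K) ≤ M := sup_le hxM (sup_le (hQx.trans hxM) hKM)
      rw [hsup] at hle
      exact (lt_irrefl P) (lt_of_le_of_lt hle hMP)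
  have hcomm : ∀ x ∈ P, ∀ y ∈ P, x * y * x⁻¹ * y⁻¹ ∈ Q := fun x hx y hy =>
    hKQ (Subgroup.subset_closure (Or.inl ⟨x, hx, y, hy, rfl⟩))
  have hpow : ∀ x ∈ P, x ^ p ∈ Q := fun x hx =>
    hKQ (Subgroup.subset_closure (Or.inr ⟨x, hx, rfl⟩))
  refine ⟨?_, hcomm, hpow⟩
  intro x hx
  rw [Subgroup.mem_normalizer_iff]
  have key : ∀ w ∈ P, ∀ h ∈ Q, w * h * w⁻¹ ∈ Q := by
    intro w hw h hh
    have h1 : w * h * w⁻¹ * h⁻¹ ∈ Q := hcomm w hw h (hQP hh)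
    have h2 := Q.mul_mem h1 hh
    simpa [mul_assoc] using h2
  intro h
  constructor
  · intro hh; exact key x hx h hh
  · intro hh
    have h3 := key x⁻¹ (P.inv_mem hx) _ hh
    have he : x⁻¹ * (x * h * x⁻¹) * x⁻¹⁻¹ = h := by group
    rwa [he] at h3
end

section
/- Let S be a finite group. For every element X of the Burnside ring A(S) and every subgroup P ≤ S, the congruence Σ_{s̄ ∈ W_S P} |X^{⟨s⟩P}| ≡ 0 (mod |W_S P|) holds, where W_S P = N_S(P)/P, the sum runs over coset representatives s of P in N_S(P), and ⟨s⟩P denotes the subgroup generated by s and P. -/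
open MulAction

namespace Stmt14

variable {S : Type*} [Group S] (P : Subgroup S) {A : Type*} [MulAction S A]

theorem smul_mem_fp (n : (Subgroup.normalizer (P : Set S))) {a : A} (ha : a ∈ fixedPoints P A) :
    (n : S) • a ∈ fixedPoints P A := by
  intro p
  have hq : (n : S)⁻¹ * (p : S) * (n : S) ∈ P := by
    have h := (Subgroup.mem_normalizer_iff.mp ((Subgroup.normalizer (P : Set S)).inv_mem n.2) (p : S)).mp p.2
    simpa using h
  have key' : ((n : S)⁻¹ * (p : S) * (n : S)) • a = a := ha ⟨_, hq⟩
  have hmul : (p : S) * (n : S) = (n : S) * ((n : S)⁻¹ * (p : S) * (n : S)) := by group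
  calc (p : S) • ((n : S) • a) = ((p : S) * (n : S)) • a := by rw [mul_smul]
    _ = ((n : S) * ((n : S)⁻¹ * (p : S) * (n : S))) • a := by rw [hmul]
    _ = (n : S) • a := by rw [mul_smul, key']

noncomputable instance wAction :
    MulAction (↥(Subgroup.normalizer (P : Set S)) ⧸ P.subgroupOf (Subgroup.normalizer (P : Set S))) (fixedPoints P A) where
  smul w a := Quotient.liftOn' w
    (fun n => (⟨(n : S) • (a : A), smul_mem_fp P n a.2⟩ : fixedPoints P A))
    (by
      intro n m hnm
      have h : (n : S)⁻¹ * (m : S) ∈ P := (QuotientGroup.leftRel_apply.mp hnm : _)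
      have h2 : ((n : S)⁻¹ * (m : S)) • (a : A) = a := a.2 ⟨_, h⟩
      ext
      show (n : S) • (a : A) = (m : S) • (a : A)
      calc (n : S) • (a : A) = (n : S) • (((n : S)⁻¹ * (m : S)) • (a : A)) := by rw [h2]
        _ = (m : S) • (a : A) := by rw [← mul_smul]; group)
  one_smul a := by
    ext
    show ((1 : ↥(Subgroup.normalizer (P : Set S))) : S) • (a : A) = a
    simp
  mul_smul w₁ w₂ a := by
    induction w₁ using Quotient.inductionOn'
    induction w₂ using Quotient.inductionOn'
    ext
    show ((_ * _ : ↥(Subgroup.normalizer (P : Set S))) : S) • (a : A) = _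
    simp [mul_smul]
    rfl

theorem wsmul_mk (n : ↥(Subgroup.normalizer (P : Set S))) (a : fixedPoints P A) :
    ((QuotientGroup.mk n : ↥(Subgroup.normalizer (P : Set S)) ⧸ P.subgroupOf (Subgroup.normalizer (P : Set S))) • a : fixedPoints P A)
      = ⟨(n : S) • (a : A), smul_mem_fp P n a.2⟩ := rfl

theorem wsmul_out (w : ↥(Subgroup.normalizer (P : Set S)) ⧸ P.subgroupOf (Subgroup.normalizer (P : Set S))) (a : fixedPoints P A) :
    ((w • a : fixedPoints P A) : A) = ((Quotient.out w : ↥(Subgroup.normalizer (P : Set S))) : S) • (a : A) := by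
  conv_lhs => rw [← QuotientGroup.out_eq' w]
  exact congrArg Subtype.val (wsmul_mk P (Quotient.out w) a)

/-- fixed points of `w` in `A^P` are `A^{⟨s⟩P}` for `s = out w`. -/
noncomputable def fixedByEquiv (w : ↥(Subgroup.normalizer (P : Set S)) ⧸ P.subgroupOf (Subgroup.normalizer (P : Set S))) :
    fixedBy (fixedPoints P A) w ≃
      fixedPoints (↥(P ⊔ Subgroup.closure {((Quotient.out w : ↥(Subgroup.normalizer (P : Set S))) : S)})) A where
  toFun x := ⟨((x : fixedPoints P A) : A), by
    set s : S := ((Quotient.out w : ↥(Subgroup.normalizer (P : Set S))) : S) with hs_def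
    have hw : w • (x : fixedPoints P A) = (x : fixedPoints P A) := x.2
    have hs : s • ((x : fixedPoints P A) : A) = ((x : fixedPoints P A) : A) := by
      rw [← wsmul_out]; exact congrArg Subtype.val hw
    have hle : P ⊔ Subgroup.closure {s} ≤ stabilizer S ((x : fixedPoints P A) : A) := by
      apply sup_le
      · intro p hp; exact (x : fixedPoints P A).2 ⟨p, hp⟩
      · rw [Subgroup.closure_le]
        intro t ht
        rcases ht with rfl
        exact hs
    intro g
    exact hle g.2⟩
  invFun y :=
    ⟨⟨(y : A), fun p => y.2 ⟨(p : S), le_sup_left (α := Subgroup S) p.2⟩⟩, by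
      apply Subtype.ext
      rw [wsmul_out]
      exact y.2 ⟨_, le_sup_right (α := Subgroup S)
        (Subgroup.subset_closure (Set.mem_singleton _))⟩⟩
  left_inv x := Subtype.ext (Subtype.ext rfl)
  right_inv y := Subtype.ext rfl

theorem burn {S : Type*} [Group S] (P : Subgroup S) (X : Type*) [Fintype X] [MulAction S X]
    [Finite (↥(Subgroup.normalizer (P : Set S)) ⧸ P.subgroupOf (Subgroup.normalizer (P : Set S)))] :
    (Nat.card (↥(Subgroup.normalizer (P : Set S)) ⧸ P.subgroupOf (Subgroup.normalizer (P : Set S))) : ℤ) ∣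
      ∑ᶠ w : ↥(Subgroup.normalizer (P : Set S)) ⧸ P.subgroupOf (Subgroup.normalizer (P : Set S)),
        (Nat.card (fixedPoints
          (↥(P ⊔ Subgroup.closure {((Quotient.out w : ↥(Subgroup.normalizer (P : Set S))) : S)})) X) : ℤ) := by
  classical
  set W := ↥(Subgroup.normalizer (P : Set S)) ⧸ P.subgroupOf (Subgroup.normalizer (P : Set S))
  have : Fintype W := Fintype.ofFinite _
  have : Fintype (fixedPoints P X) := Fintype.ofFinite _
  have h := MulAction.sum_card_fixedBy_eq_card_orbits_mul_card_group W (fixedPoints P X)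
  have hnat : (∑ w : W, Nat.card (fixedPoints
      (↥(P ⊔ Subgroup.closure {((Quotient.out w : ↥(Subgroup.normalizer (P : Set S))) : S)})) X))
      = Fintype.card (Quotient (orbitRel W (fixedPoints P X))) * Fintype.card W := by
    rw [← h]
    exact Finset.sum_congr rfl fun w _ => by
      rw [Nat.card_congr (fixedByEquiv P w).symm, Nat.card_eq_fintype_card]
  rw [finsum_eq_sum_of_fintype, ← Nat.cast_sum, hnat, Nat.card_eq_fintype_card]
  push_cast
  exact dvd_mul_left _ _

end Stmt14

/-- For every element `X = [A] - [B]` of the Burnside ring of a finite group `S` and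
every subgroup `P ≤ S`, `Σ_{s̄ ∈ W_S P} |X^{⟨s⟩P}| ≡ 0 (mod |W_S P|)`, where
`W_S P = N_S(P)/P` and `⟨s⟩P` is the subgroup generated by a lift `s` and `P`. -/
theorem stmt_14 (S : Type*) [Group S] [Fintype S] (P : Subgroup S)
    (A B : Type*) [Fintype A] [Fintype B] [MulAction S A] [MulAction S B] :
    (Nat.card (↥(Subgroup.normalizer (P : Set S)) ⧸ P.subgroupOf (Subgroup.normalizer (P : Set S))) : ℤ) ∣
      ∑ᶠ w : ↥(Subgroup.normalizer (P : Set S)) ⧸ P.subgroupOf (Subgroup.normalizer (P : Set S)),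
        ((Nat.card (MulAction.fixedPoints
            (↥(P ⊔ Subgroup.closure {((Quotient.out w : ↥(Subgroup.normalizer (P : Set S))) : S)})) A) : ℤ)
          - (Nat.card (MulAction.fixedPoints
            (↥(P ⊔ Subgroup.closure {((Quotient.out w : ↥(Subgroup.normalizer (P : Set S))) : S)})) B) : ℤ)) := by
  classical
  have : Fintype (↥(Subgroup.normalizer (P : Set S)) ⧸ P.subgroupOf (Subgroup.normalizer (P : Set S))) := Fintype.ofFinite _
  have hA := Stmt14.burn P A
  have hB := Stmt14.burn P B
  rw [finsum_eq_sum_of_fintype] at hA hB ⊢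
  rw [Finset.sum_sub_distrib]
  exact dvd_sub hA hB
end
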